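/- Let n, m, k be positive integers with m ≥ 2. Then the number of nonzero digits in the base-m expansion of n·(m^k − 1)/(m − 1) is at least k. -/
import Mathlib

/-- Repunit in base `m` with `k` digits. -/
def repu (m : ℕ) : ℕ → ℕ
  | 0 => 0
  | k+1 => 1 + m * repu m k

/-- Number of nonzero digits of `x` in base `m`. -/
def nzd (m x : ℕ) : ℕ := ((Nat.digits m x).filter (fun d => d ≠ 0)).length

lemma nzd_zero (m : ℕ) : nzd m 0 = 0 := by simp [nzd]

lemma nzd_rec (m x : ℕ) (hm : 2 ≤ m) :
    nzd m x = (if x % m ≠ 0 then 1 else 0) + nzd m (x / m) := by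
  rcases Nat.eq_zero_or_pos x with rfl | hx
  · simp [nzd]
  · unfold nzd
    rw [Nat.digits_def' hm hx, List.filter_cons]
    split_ifs with h1 h2 h2 <;> simp_all <;> omega

lemma key_ineq (m x y c : ℕ) (hm : 2 ≤ m) (hx : x < m) (hy : y < m) (hc : c ≤ 1) :
    (if (x + y + c) % m ≠ 0 then 1 else 0) + (x + y + c) / m ≤
      (if x ≠ 0 then 1 else 0) + (if y ≠ 0 then 1 else 0) + c := by
  have hq2 : (x + y + c) / m < 2 := by
    rw [Nat.div_lt_iff_lt_mul (by omega)]; omega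
  have hdm := Nat.div_add_mod (x + y + c) m
  have hrm : (x + y + c) % m < m := Nat.mod_lt _ (by omega)
  set q := (x + y + c) / m with hqdef
  set r := (x + y + c) % m with hrdef
  interval_cases q <;> split_ifs <;> omega

lemma nzd_subadd (m : ℕ) (hm : 2 ≤ m) :
    ∀ s a b c, a + b + c = s → c ≤ 1 → nzd m (a + b + c) ≤ nzd m a + nzd m b + c := by
  intro s
  induction s using Nat.strong_induction_on with
  | _ s ih =>
    intro a b c hs hc
    rcases Nat.eq_zero_or_pos (a + b + c) with h0 | hpos
    · obtain ⟨rfl, rfl, rfl⟩ : a = 0 ∧ b = 0 ∧ c = 0 := by omega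
      simp [nzd_zero]
    have hxm : a % m < m := Nat.mod_lt _ (by omega)
    have hym : b % m < m := Nat.mod_lt _ (by omega)
    have hc' : (a % m + b % m + c) / m ≤ 1 := by
      have : (a % m + b % m + c) / m < 2 := by
        rw [Nat.div_lt_iff_lt_mul (by omega)]; omega
      omega
    have hmod : (a + b + c) % m = (a % m + b % m + c) % m := by
      conv_lhs => rw [← Nat.mod_add_div a m, ← Nat.mod_add_div b m]
      rw [show a % m + m * (a / m) + (b % m + m * (b / m)) + c
            = (a % m + b % m + c) + m * (a / m + b / m) by ring]
      rw [Nat.add_mul_mod_self_left]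
    have hdiv : (a + b + c) / m = a / m + b / m + (a % m + b % m + c) / m := by
      conv_lhs => rw [← Nat.mod_add_div a m, ← Nat.mod_add_div b m]
      rw [show a % m + m * (a / m) + (b % m + m * (b / m)) + c
            = (a % m + b % m + c) + m * (a / m + b / m) by ring]
      rw [Nat.add_mul_div_left _ _ (show 0 < m by omega)]
      omega
    have hlt : a / m + b / m + (a % m + b % m + c) / m < s := by
      have : (a + b + c) / m < a + b + c := Nat.div_lt_self hpos (by omega)
      omega
    have H := ih _ hlt (a / m) (b / m) ((a % m + b % m + c) / m) rfl hc'
    have Hk := key_ineq m (a % m) (b % m) c hm hxm hym hc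
    rw [nzd_rec m (a + b + c) hm, hmod, hdiv]
    rw [nzd_rec m a hm, nzd_rec m b hm]
    rw [← hmod] at Hk
    split_ifs at * <;> omega

lemma nzd_split (m : ℕ) (hm : 2 ≤ m) :
    ∀ k r t, r < m ^ k → nzd m (r + m ^ k * t) = nzd m r + nzd m t := by
  intro k
  induction k with
  | zero =>
    intro r t hr
    simp only [pow_zero] at hr
    have : r = 0 := by omega
    subst this
    simp [nzd_zero]
  | succ k ih =>
    intro r t hr
    have hmpos : 0 < m := by omega
    have h1 : (r + m ^ (k+1) * t) % m = r % m := by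
      rw [pow_succ, show r + m ^ k * m * t = r + m * (m ^ k * t) by ring,
        Nat.add_mul_mod_self_left]
    have h2 : (r + m ^ (k+1) * t) / m = r / m + m ^ k * t := by
      rw [pow_succ, show r + m ^ k * m * t = r + m * (m ^ k * t) by ring,
        Nat.add_mul_div_left _ _ hmpos]
    have hr' : r / m < m ^ k := by
      rw [Nat.div_lt_iff_lt_mul hmpos]
      calc r < m ^ (k+1) := hr
        _ = m ^ k * m := pow_succ m k
    rw [nzd_rec m (r + m ^ (k+1) * t) hm, h1, h2, ih _ t hr', nzd_rec m r hm]
    omega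

lemma nzd_base (m : ℕ) (hm : 2 ≤ m) (q : ℕ) (hq1 : 1 ≤ q) (hqm : q < m) :
    ∀ k, nzd m (q * repu m k) = k := by
  intro k
  induction k with
  | zero => simp [repu, nzd_zero]
  | succ k ih =>
    have hmpos : 0 < m := by omega
    have he : q * repu m (k+1) = q + m * (q * repu m k) := by
      show q * (1 + m * repu m k) = _
      ring
    rw [he, nzd_rec m _ hm]
    have h1 : (q + m * (q * repu m k)) % m = q := by
      rw [Nat.add_mul_mod_self_left, Nat.mod_eq_of_lt hqm]
    have h2 : (q + m * (q * repu m k)) / m = q * repu m k := by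
      rw [Nat.add_mul_div_left _ _ hmpos, Nat.div_eq_of_lt hqm]
      omega
    rw [h1, h2, ih]
    simp only [if_pos (by omega : q ≠ 0)]
    omega

lemma repu_mul (m : ℕ) (hm : 2 ≤ m) : ∀ k, (m - 1) * repu m k = m ^ k - 1 := by
  intro k
  induction k with
  | zero => simp [repu]
  | succ k ih =>
    have hpk : 1 ≤ m ^ k := Nat.one_le_pow _ _ (by omega)
    have hps : m ^ (k+1) = m * m ^ k := by rw [pow_succ]; ring
    have : (m - 1) * repu m (k+1) = (m - 1) + m * ((m - 1) * repu m k) := by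
      show (m - 1) * (1 + m * repu m k) = _
      ring
    rw [this, ih]
    have h3 : m * m ^ k = m * (m ^ k - 1) + m := by
      calc m * m ^ k = m * ((m ^ k - 1) + 1) := by rw [Nat.sub_add_cancel hpk]
        _ = m * (m ^ k - 1) + m := by ring
    omega

lemma repu_pos (m k : ℕ) (hm : 2 ≤ m) (hk : 0 < k) : 0 < repu m k := by
  cases k with
  | zero => omega
  | succ j => show 0 < 1 + m * repu m j; omega

lemma main_lemma (m k : ℕ) (hm : 2 ≤ m) (hk : 0 < k) :
    ∀ N, 0 < N → repu m k ∣ N → k ≤ nzd m N := by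
  intro N
  induction N using Nat.strong_induction_on with
  | _ N ih =>
    intro hN hdvd
    have hR : 0 < repu m k := repu_pos m k hm hk
    have hRk : (m - 1) * repu m k = m ^ k - 1 := repu_mul m hm k
    have hpk1 : 1 ≤ m ^ k := Nat.one_le_pow _ _ (by omega)
    have hpk2 : 2 ≤ m ^ k := by
      calc 2 ≤ m := hm
        _ = m ^ 1 := (pow_one m).symm
        _ ≤ m ^ k := Nat.pow_le_pow_right (by omega) hk
    by_cases hsmall : N < m ^ k
    · obtain ⟨q, hq⟩ := hdvd
      have hq1 : 1 ≤ q := by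
        rcases Nat.eq_zero_or_pos q with rfl | h
        · omega
        · exact h
      have hqm : q < m := by
        by_contra h
        push_neg at h
        have h1 : m * repu m k ≤ q * repu m k := Nat.mul_le_mul_right _ h
        have h2 : (m - 1) * repu m k + repu m k = m * repu m k := by
          rw [← Nat.succ_mul, show (m - 1).succ = m by omega]
        have h3 : q * repu m k = N := by rw [hq]; ring
        omega
      rw [hq, mul_comm]
      exact (nzd_base m hm q hq1 hqm k).ge
    · push_neg at hsmall
      have hmkpos : 0 < m ^ k := by omega
      obtain ⟨t, r, hN', hrlt⟩ : ∃ t r, N = r + m ^ k * t ∧ r < m ^ k :=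
        ⟨N / m ^ k, N % m ^ k, by rw [Nat.mod_add_div], Nat.mod_lt _ hmkpos⟩
      have ht : 0 < t := by
        rcases Nat.eq_zero_or_pos t with rfl | h
        · simp at hN'; omega
        · exact h
      have h5 : 2 * t ≤ m ^ k * t := Nat.mul_le_mul_right t hpk2
      have h6 : t ≤ m ^ k * t := by omega
      have hlt : r + t < N := by omega
      have hdvd2 : repu m k ∣ (m ^ k - 1) * t := by
        exact Dvd.dvd.mul_right ⟨m - 1, by rw [← hRk]; ring⟩ t
      have hsub : N = (r + t) + (m ^ k - 1) * t := by
        have h7 : (m ^ k - 1) * t + t = m ^ k * t := by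
          rw [Nat.sub_mul, one_mul, Nat.sub_add_cancel h6]
        omega
      have hdvd' : repu m k ∣ r + t := by
        have h8 := Nat.dvd_sub hdvd hdvd2
        rwa [hsub, Nat.add_sub_cancel] at h8
      have hpos' : 0 < r + t := by omega
      have Hih := ih (r + t) hlt hpos' hdvd'
      have hsplit : nzd m N = nzd m r + nzd m t := by
        rw [hN']
        exact nzd_split m hm k r t hrlt
      have hsub2 : nzd m (r + t) ≤ nzd m r + nzd m t := by
        have := nzd_subadd m hm (r + t) r t 0 (by ring) (by omega)
        simpa using this
      omega

/-- For positive integers `n, m, k` with `m ≥ 2`, the number of nonzero digits in the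
base-`m` expansion of `n·(m^k - 1)/(m - 1)` is at least `k`. -/
theorem count_nonzero_digits_ge (n m k : ℕ) (hn : 0 < n) (hm : 2 ≤ m) (hk : 0 < k) :
    k ≤ ((Nat.digits m (n * ((m ^ k - 1) / (m - 1)))).filter (fun d => d ≠ 0)).length := by
  have hrepu : (m ^ k - 1) / (m - 1) = repu m k := by
    have h := repu_mul m hm k
    exact Nat.div_eq_of_eq_mul_left (by omega) (by rw [← h]; ring)
  rw [hrepu]
  have hR : 0 < repu m k := repu_pos m k hm hk
  exact main_lemma m k hm hk (n * repu m k) (by positivity) (Dvd.intro_left n rfl)
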